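/- Let d ≥ 3 and a, b ≥ 0 with a² + b²d = 1 and a > 0. Then the maximum over unit vectors (x,y) ∈ ℝ² of |a·x^d + b·d·x^{d-1}·y| is strictly greater than ((d-1)/d)^{(d-1)/2}. -/

import Mathlib

set_option maxHeartbeats 1000000 in
theorem boundary_spectral (d : ℕ) (hd : 3 ≤ d) (a b : ℝ) (ha : 0 < a) (hb : 0 ≤ b)
    (hnorm : a ^ 2 + b ^ 2 * d = 1) :
    sSup {z : ℝ | ∃ x y : ℝ, x ^ 2 + y ^ 2 = 1 ∧
        z = |a * x ^ d + b * d * x ^ (d - 1) * y|} >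
      (((d : ℝ) - 1) / d) ^ (((d : ℝ) - 1) / 2) := by
  have hd3 : (3 : ℝ) ≤ (d : ℝ) := by exact_mod_cast hd
  have hdpos : (0 : ℝ) < d := by linarith
  set u : ℝ := ((d : ℝ) - 1) / d with hu_def
  set c : ℝ := u ^ (((d : ℝ) - 1) / 2) with hc_def
  have hu0 : 0 < u := div_pos (by linarith) hdpos
  have hu1 : u < 1 := by rw [hu_def, div_lt_one hdpos]; linarith
  have hc0 : 0 < c := Real.rpow_pos_of_pos hu0 _
  -- c ≤ u
  have hcu : c ≤ u := by
    have h1 : (1 : ℝ) ≤ ((d : ℝ) - 1) / 2 := by linarith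
    have := Real.rpow_le_rpow_of_exponent_ge hu0 hu1.le h1
    rwa [Real.rpow_one] at this
  -- bounded above
  have hbdd : BddAbove {z : ℝ | ∃ x y : ℝ, x ^ 2 + y ^ 2 = 1 ∧
      z = |a * x ^ d + b * d * x ^ (d - 1) * y|} := by
    refine ⟨a + b * d, ?_⟩
    rintro z ⟨x, y, hxy, rfl⟩
    have hx : |x| ≤ 1 := by
      rw [← Real.sqrt_one, ← Real.sqrt_sq (abs_nonneg x), sq_abs]
      exact Real.sqrt_le_sqrt (by nlinarith [sq_nonneg y])
    have hy : |y| ≤ 1 := by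
      rw [← Real.sqrt_one, ← Real.sqrt_sq (abs_nonneg y), sq_abs]
      exact Real.sqrt_le_sqrt (by nlinarith [sq_nonneg x])
    have h1 : |a * x ^ d| ≤ a := by
      rw [abs_mul, abs_pow, abs_of_nonneg ha.le]
      have : |x| ^ d ≤ 1 := pow_le_one₀ (abs_nonneg x) hx
      nlinarith [pow_nonneg (abs_nonneg x) d]
    have h2 : |b * ↑d * x ^ (d - 1) * y| ≤ b * d := by
      rw [abs_mul, abs_mul, abs_mul, abs_pow, abs_of_nonneg hb, Nat.abs_cast]
      have hp : |x| ^ (d - 1) ≤ 1 := pow_le_one₀ (abs_nonneg x) hx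
      have hp0 : (0:ℝ) ≤ |x| ^ (d - 1) := pow_nonneg (abs_nonneg x) _
      have hbd : (0:ℝ) ≤ b * d := mul_nonneg hb hdpos.le
      have hq : |x| ^ (d - 1) * |y| ≤ 1 := by nlinarith [abs_nonneg y]
      calc b * ↑d * |x| ^ (d - 1) * |y| = (b * ↑d) * (|x| ^ (d - 1) * |y|) := by ring
        _ ≤ b * ↑d := mul_le_of_le_one_right hbd hq
    calc |a * x ^ d + b * ↑d * x ^ (d - 1) * y| ≤ |a * x ^ d| + |b * ↑d * x ^ (d - 1) * y| :=
          abs_add_le _ _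
      _ ≤ a + b * d := add_le_add h1 h2
  rcases lt_or_ge c a with hca | hac
  · -- witness (1, 0)
    have hmem : a ∈ {z : ℝ | ∃ x y : ℝ, x ^ 2 + y ^ 2 = 1 ∧
        z = |a * x ^ d + b * d * x ^ (d - 1) * y|} := by
      refine ⟨1, 0, by norm_num, ?_⟩
      simp [abs_of_nonneg ha.le]
    exact lt_of_lt_of_le hca (le_csSup hbdd hmem)
  · -- witness (√u, 1/√d)
    set s : ℝ := Real.sqrt u with hs_def
    set t : ℝ := (Real.sqrt d)⁻¹ with ht_def
    have hs0 : 0 < s := Real.sqrt_pos.mpr hu0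
    have hs2 : s ^ 2 = u := Real.sq_sqrt hu0.le
    have hs1 : s < 1 := by nlinarith
    have hsqd0 : 0 < Real.sqrt d := Real.sqrt_pos.mpr hdpos
    have ht2 : s ^ 2 + t ^ 2 = 1 := by
      rw [hs2, ht_def, ← Real.sqrt_inv, Real.sq_sqrt (by positivity), hu_def]
      field_simp
      ring
    -- s ^ (d-1) = c
    have hd1 : 1 ≤ d := by omega
    have hcast : ((d - 1 : ℕ) : ℝ) = (d : ℝ) - 1 := by
      push_cast [Nat.cast_sub hd1]; ring
    have hspow : s ^ (d - 1) = c := by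
      rw [hs_def, Real.sqrt_eq_rpow, ← Real.rpow_natCast (u ^ (1 / (2:ℝ))) (d-1),
        ← Real.rpow_mul hu0.le, hcast, hc_def]
      ring_nf
    have hsd : s ^ d = c * s := by
      have hdd : d = (d - 1) + 1 := by omega
      rw [hdd, pow_succ, hspow]
    -- d * t = √d
    have hdt : (d : ℝ) * t = Real.sqrt d := by
      have hdd : Real.sqrt d * Real.sqrt d = (d : ℝ) := Real.mul_self_sqrt hdpos.le
      rw [ht_def, ← hdd]
      field_simp
      rw [Real.sqrt_sq hsqd0.le]
    -- b * √d = √(1 - a²)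
    set r : ℝ := Real.sqrt (1 - a ^ 2) with hr_def
    have hba : b ^ 2 * d = 1 - a ^ 2 := by linarith
    have hbr : b * Real.sqrt d = r := by
      rw [hr_def, ← hba, Real.sqrt_mul (sq_nonneg b), Real.sqrt_sq hb]
    have hr0 : 0 ≤ r := Real.sqrt_nonneg _
    have hr2 : r ^ 2 = 1 - a ^ 2 := Real.sq_sqrt (by nlinarith [sq_nonneg b])
    -- key inequality : 1 < a * s + r
    have hau : a ≤ u := le_trans hac hcu
    have hau' : a ≤ s ^ 2 := by rw [hs2]; exact hau
    have hkey : 1 < a * s + r := by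
      have hs3 : s ^ 3 < 1 := pow_lt_one₀ hs0.le hs1 (by norm_num)
      have h23 : 0 < 2 - s - s ^ 3 := by linarith
      have hA : a * (1 + s ^ 2) ≤ s ^ 2 * (1 + s ^ 2) :=
        mul_le_mul_of_nonneg_right hau' (by positivity)
      have hB : s ^ 2 * (1 + s ^ 2) < 2 * s := by nlinarith [mul_pos hs0 h23]
      have h3 : 0 < 2 * s - a * (1 + s ^ 2) := by linarith
      have hlt : (1 - a * s) ^ 2 < 1 - a ^ 2 := by nlinarith [mul_pos ha h3]
      have := Real.lt_sqrt_of_sq_lt hlt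
      rw [← hr_def] at this
      linarith
    -- the witness value
    have hval : a * s ^ d + b * ↑d * s ^ (d - 1) * t = c * (a * s + r) := by
      rw [hsd, hspow, ← hbr, ← hdt]; ring
    have hmem : |a * s ^ d + b * ↑d * s ^ (d - 1) * t| ∈ {z : ℝ | ∃ x y : ℝ,
        x ^ 2 + y ^ 2 = 1 ∧ z = |a * x ^ d + b * d * x ^ (d - 1) * y|} :=
      ⟨s, t, ht2, rfl⟩
    have hgt : c < |a * s ^ d + b * ↑d * s ^ (d - 1) * t| := by
      have h0 : 0 ≤ c * (a * s + r) :=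
        mul_nonneg hc0.le (by positivity)
      rw [hval, abs_of_nonneg h0]
      calc c = c * 1 := (mul_one c).symm
        _ < c * (a * s + r) := mul_lt_mul_of_pos_left hkey hc0
    exact lt_of_lt_of_le hgt (le_csSup hbdd hmem)
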